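/- (Theorem 2.1.) Let N and s be positive natural numbers, and work in ℝ^N with the standard inner product ⟨·,·⟩. Let D : ℝ^N → ℝ^N be a symmetric linear map (⟨D v, w⟩ = ⟨v, D w⟩ for all v, w). Let τ ∈ ℝ, let a : Fin s → Fin s → ℝ and b : Fin s → ℝ be Runge–Kutta coefficients satisfying the symplectic condition bᵢ aᵢⱼ + bⱼ aⱼᵢ = bᵢ bⱼ for all i, j. For each i, let Gᵢ : ℝ^N → ℝ^N be a linear map with ⟨Gᵢ v, v⟩ = 0 for all v ∈ ℝ^N. Suppose uⁿ, uⁿ⁺¹ ∈ ℝ^N and stage values uᵢ, kᵢ ∈ ℝ^N (i = 1,…,s) satisfy D kᵢ = Gᵢ uᵢ, uᵢ = uⁿ + τ Σⱼ aᵢⱼ kⱼ, and uⁿ⁺¹ = uⁿ + τ Σᵢ bᵢ kᵢ. Then ½⟨D uⁿ⁺¹, uⁿ⁺¹⟩ = ½⟨D uⁿ, uⁿ⟩. -/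
import Mathlib

open scoped RealInnerProductSpace BigOperators

/-- Theorem 2.1: a symplectic Runge–Kutta step of the linearized system
`D kᵢ = Gᵢ uᵢ` conserves the discrete momentum ½⟨D uⁿ, uⁿ⟩. -/
theorem scheme21_momentum_conservation
    (N s : ℕ) (hN : 0 < N) (hs : 0 < s)
    (D : EuclideanSpace ℝ (Fin N) →ₗ[ℝ] EuclideanSpace ℝ (Fin N))
    (hD : ∀ v w : EuclideanSpace ℝ (Fin N), ⟪D v, w⟫ = ⟪v, D w⟫)
    (τ : ℝ) (a : Fin s → Fin s → ℝ) (b : Fin s → ℝ)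
    (hsym : ∀ i j, b i * a i j + b j * a j i = b i * b j)
    (G : Fin s → (EuclideanSpace ℝ (Fin N) →ₗ[ℝ] EuclideanSpace ℝ (Fin N)))
    (hG : ∀ i (v : EuclideanSpace ℝ (Fin N)), ⟪G i v, v⟫ = 0)
    (un un1 : EuclideanSpace ℝ (Fin N)) (uS kS : Fin s → EuclideanSpace ℝ (Fin N))
    (hk : ∀ i, D (kS i) = G i (uS i))
    (hstage : ∀ i, uS i = un + τ • ∑ j, a i j • kS j)
    (hnext : un1 = un + τ • ∑ i, b i • kS i) :
    (1/2 : ℝ) * ⟪D un1, un1⟫ = (1/2 : ℝ) * ⟪D un, un⟫ := by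
  set q : Fin s → Fin s → ℝ := fun i j => ⟪D (kS i), kS j⟫ with hq
  have hqsym : ∀ i j, q i j = q j i := by
    intro i j
    show ⟪D (kS i), kS j⟫ = ⟪D (kS j), kS i⟫
    rw [hD, real_inner_comm]
  have hstage0 : ∀ i, ⟪D (kS i), uS i⟫ = 0 := by
    intro i; rw [hk, hG]
  have hkun : ∀ i, ⟪D (kS i), un⟫ = -τ * ∑ j, a i j * q i j := by
    intro i
    have h := hstage0 i
    rw [hstage i] at h
    simp only [inner_add_right, real_inner_smul_right, inner_sum] at h
    linarith
  have hDw : ∀ v, ⟪D (τ • ∑ i, b i • kS i), v⟫ = τ * ∑ i, b i * ⟪D (kS i), v⟫ := by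
    intro v
    simp only [map_smul, map_sum, sum_inner, real_inner_smul_left, Finset.mul_sum]
  have key : 2 * ∑ i, ∑ j, b i * a i j * q i j = ∑ i, ∑ j, b i * b j * q i j := by
    have h1 : ∑ i, ∑ j, b j * a j i * q i j = ∑ i, ∑ j, b i * a i j * q i j := by
      rw [Finset.sum_comm]
      refine Finset.sum_congr rfl fun i _ => Finset.sum_congr rfl fun j _ => ?_
      rw [hqsym]
    calc 2 * ∑ i, ∑ j, b i * a i j * q i j
        = ∑ i, ∑ j, b i * a i j * q i j + ∑ i, ∑ j, b j * a j i * q i j := by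
          rw [h1]; ring
      _ = ∑ i, ∑ j, (b i * a i j + b j * a j i) * q i j := by
          rw [← Finset.sum_add_distrib]
          refine Finset.sum_congr rfl fun i _ => ?_
          rw [← Finset.sum_add_distrib]
          refine Finset.sum_congr rfl fun j _ => ?_; ring
      _ = ∑ i, ∑ j, b i * b j * q i j := by
          refine Finset.sum_congr rfl fun i _ => Finset.sum_congr rfl fun j _ => ?_
          rw [hsym]
  rw [hnext]
  set w := ∑ i, b i • kS i with hw
  have expand : ⟪D (un + τ • w), un + τ • w⟫
      = ⟪D un, un⟫ + 2 * ⟪D (τ • w), un⟫ + ⟪D (τ • w), τ • w⟫ := by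
    simp only [map_add, inner_add_left, inner_add_right]
    have : ⟪D un, τ • w⟫ = ⟪D (τ • w), un⟫ := by rw [hD, real_inner_comm]
    linarith
  have h2 : ⟪D (τ • w), un⟫ = -(τ*τ) * ∑ i, ∑ j, b i * (a i j * q i j) := by
    rw [hDw]
    simp only [hkun, Finset.mul_sum]
    refine Finset.sum_congr rfl fun i _ => Finset.sum_congr rfl fun j _ => ?_; ring
  have h3 : ⟪D (τ • w), τ • w⟫ = (τ*τ) * ∑ i, ∑ j, b i * b j * q i j := by
    rw [hDw]
    simp only [hw, inner_sum, real_inner_smul_right, Finset.mul_sum]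
    refine Finset.sum_congr rfl fun i _ => Finset.sum_congr rfl fun j _ => ?_
    show τ * (b i * (τ * (b j * q i j))) = τ * τ * (b i * b j * q i j); ring
  rw [expand, h2, h3]
  have key' : 2 * ∑ i, ∑ j, b i * (a i j * q i j) = ∑ i, ∑ j, b i * b j * q i j := by
    rw [← key]
    congr 1
    exact Finset.sum_congr rfl fun i _ => Finset.sum_congr rfl fun j _ => by ring
  nlinarith [key']
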